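/- arXiv:1909.03612 — 2 statements merged into one kernel-verified Lean document; each statement's English description precedes it below -/
import Mathlib

section
/- Let G be a discrete groupoid with unit space G⁰ and let f : G → ℂ be finitely supported. Then ‖f‖_∞ ≤ sup_{x ∈ G⁰} ‖π_x(f)‖, where π_x(f) is the operator of left convolution by f on ℓ^p(Gx). Moreover, if f is supported on G⁰, then sup_x ‖π_x(f)‖ = ‖f‖_∞. -/
open CategoryTheory
open scoped ENNReal Classical

/-- The set of arrows of a (discrete) groupoid with object type `Ob`. -/
abbrev GrpdArr (Ob : Type*) [Groupoid Ob] := Σ (a : Ob) (b : Ob), a ⟶ b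

/-- The arrows with domain `x`. -/
abbrev GrpdSrc (Ob : Type*) [Groupoid Ob] (x : Ob) := Σ b : Ob, x ⟶ b

/-- An arrow is a unit if it is an identity arrow. -/
def IsUnitArrow {Ob : Type*} [Groupoid Ob] (γ : GrpdArr Ob) : Prop :=
  ∃ a : Ob, γ = ⟨a, a, 𝟙 a⟩

section Helpers


lemma lp_mem_norm_le {ι κ : Type*} (p : ℝ≥0∞) [Fact (1 ≤ p)] (hp' : p ≠ ∞)
    (ξ : lp (fun _ : κ => ℂ) p) (v : ι → ℂ) (g : ι → κ)
    (hg : Set.InjOn g (Function.support v))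
    (hv : ∀ i ∈ Function.support v, v i = ξ (g i)) :
    ∃ hm : Memℓp v p, ‖(⟨v, hm⟩ : lp (fun _ : ι => ℂ) p)‖ ≤ ‖ξ‖ := by
  have hp1 : (1 : ℝ≥0∞) ≤ p := Fact.out
  have hpr : 0 < p.toReal := ENNReal.toReal_pos (by intro h; simp [h] at hp1) hp'
  set pr := p.toReal
  have hG : Summable fun k => ‖ξ k‖ ^ pr := (memℓp_gen_iff hpr).mp (lp.memℓp ξ)
  set F : ι → ℝ := fun i => ‖v i‖ ^ pr with hF
  have hFsupp : Function.support F ⊆ Function.support v := by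
    intro i hi
    simp only [F, Function.mem_support] at hi ⊢
    intro h; apply hi; simp [h, Real.zero_rpow hpr.ne']
  have hinj : Function.Injective
      (fun i : Function.support v => g i) := fun a b hab => Subtype.ext (hg a.2 b.2 hab)
  have hcomp : ∀ i : Function.support v, F i = ‖ξ (g i)‖ ^ pr := by
    intro i; simp only [F, hv i i.2]
  have hFsub : Summable fun i : Function.support v => F i := by
    have := hG.comp_injective hinj
    exact this.congr fun i => (hcomp i).symm
  have hFsum : Summable F := by
    rwa [← Set.indicator_eq_self.2 hFsupp, ← summable_subtype_iff_indicator]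
  have hmem : Memℓp v p := memℓp_gen hFsum
  refine ⟨hmem, ?_⟩
  have htsum : ∑' i, F i ≤ ∑' k, ‖ξ k‖ ^ pr := by
    rw [← tsum_subtype_eq_of_support_subset hFsupp]
    exact hFsub.tsum_le_tsum_of_inj _ hinj (fun c _ => Real.rpow_nonneg (norm_nonneg _) _)
      (fun i => le_of_eq (hcomp i)) hG
  rw [lp.norm_eq_tsum_rpow hpr, lp.norm_eq_tsum_rpow hpr]
  exact Real.rpow_le_rpow (tsum_nonneg fun i => Real.rpow_nonneg (norm_nonneg _) _) htsum
    (by positivity)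

lemma lp_norm_le_mul {ι : Type*} (p : ℝ≥0∞) [Fact (1 ≤ p)] (hp' : p ≠ ∞)
    (η ξ : lp (fun _ : ι => ℂ) p) {M : ℝ} (hM : 0 ≤ M)
    (h : ∀ i, ‖η i‖ ≤ M * ‖ξ i‖) : ‖η‖ ≤ M * ‖ξ‖ := by
  have hp1 : (1 : ℝ≥0∞) ≤ p := Fact.out
  have hpr : 0 < p.toReal := ENNReal.toReal_pos (by intro hh; simp [hh] at hp1) hp'
  set pr := p.toReal
  have hG : Summable fun k => ‖ξ k‖ ^ pr := (memℓp_gen_iff hpr).mp (lp.memℓp ξ)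
  have hF : Summable fun k => ‖η k‖ ^ pr := (memℓp_gen_iff hpr).mp (lp.memℓp η)
  have htsum : ∑' i, ‖η i‖ ^ pr ≤ M ^ pr * ∑' i, ‖ξ i‖ ^ pr := by
    rw [← tsum_mul_left]
    refine hF.tsum_le_tsum (fun i => ?_) (hG.mul_left _)
    rw [← Real.mul_rpow hM (norm_nonneg _)]
    exact Real.rpow_le_rpow (norm_nonneg _) (h i) hpr.le
  rw [lp.norm_eq_tsum_rpow hpr, lp.norm_eq_tsum_rpow hpr]
  calc (∑' i, ‖η i‖ ^ pr) ^ (1/pr) ≤ (M ^ pr * ∑' i, ‖ξ i‖ ^ pr) ^ (1/pr) :=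
        Real.rpow_le_rpow (tsum_nonneg fun i => Real.rpow_nonneg (norm_nonneg _) _) htsum
          (by positivity)
    _ = M * (∑' i, ‖ξ i‖ ^ pr) ^ (1/pr) := by
        rw [Real.mul_rpow (Real.rpow_nonneg hM _)
          (tsum_nonneg fun i => Real.rpow_nonneg (norm_nonneg _) _)]
        rw [← Real.rpow_mul hM, mul_one_div, div_self hpr.ne', Real.rpow_one]

variable {Ob : Type*} [Groupoid Ob] {x : Ob}

/-- The arrow `σ⁻¹ γ`. -/
def myArr (σ γ : GrpdSrc Ob x) : GrpdArr Ob := ⟨σ.1, γ.1, Groupoid.inv σ.2 ≫ γ.2⟩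

noncomputable def myPsi (γ : GrpdSrc Ob x) (α : GrpdArr Ob) : GrpdSrc Ob x :=
  if h : α.2.1 = γ.1 then ⟨α.1, (h.symm ▸ γ.2) ≫ Groupoid.inv α.2.2⟩ else ⟨x, 𝟙 x⟩

noncomputable def myV (ξ : GrpdSrc Ob x → ℂ) (α : GrpdArr Ob) (γ : GrpdSrc Ob x) : ℂ :=
  if h : γ.1 = α.2.1 then ξ ⟨α.1, (h ▸ γ.2 : x ⟶ α.2.1) ≫ Groupoid.inv α.2.2⟩ else 0

lemma myPsi_arr (σ γ : GrpdSrc Ob x) : myPsi γ (myArr σ γ) = σ := by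
  obtain ⟨b, g⟩ := σ
  simp [myArr, myPsi, Groupoid.inv_eq_inv]

lemma arr_myPsi (γ : GrpdSrc Ob x) (α : GrpdArr Ob) (h : α.2.1 = γ.1) :
    myArr (myPsi γ α) γ = α := by
  obtain ⟨y, z, a⟩ := α
  obtain ⟨c, g⟩ := γ
  dsimp at h
  subst h
  have h1 : myPsi (⟨z, g⟩ : GrpdSrc Ob x) ⟨y, z, a⟩ = ⟨y, g ≫ Groupoid.inv a⟩ := by
    simp [myPsi]
  rw [h1]
  simp [myArr, Groupoid.inv_eq_inv]

lemma myV_eq (ξ : GrpdSrc Ob x → ℂ) (γ : GrpdSrc Ob x) (α : GrpdArr Ob) (h : α.2.1 = γ.1) :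
    myV ξ α γ = ξ (myPsi γ α) := by
  obtain ⟨y, z, a⟩ := α
  obtain ⟨c, g⟩ := γ
  dsimp at h
  subst h
  simp [myV, myPsi]

lemma myV_ne (ξ : GrpdSrc Ob x → ℂ) (γ : GrpdSrc Ob x) (α : GrpdArr Ob) (h : ¬ α.2.1 = γ.1) :
    myV ξ α γ = 0 := by
  rw [myV, dif_neg (fun hh => h hh.symm)]

lemma conv_rewrite (f : GrpdArr Ob → ℂ) (hf : (Function.support f).Finite)
    (ξ : GrpdSrc Ob x → ℂ) (γ : GrpdSrc Ob x) :
    ∑ᶠ σ : GrpdSrc Ob x, f (myArr σ γ) * ξ σ = ∑ α ∈ hf.toFinset, f α * myV ξ α γ := by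
  set s := hf.toFinset with hs
  set s₀ := s.filter (fun α => α.2.1 = γ.1) with hs₀
  have hsupp : Function.support (fun σ => f (myArr σ γ) * ξ σ) ⊆ ↑(s₀.image (myPsi γ)) := by
    intro σ h
    have hf0 : f (myArr σ γ) ≠ 0 := left_ne_zero_of_mul h
    have hmem : myArr σ γ ∈ s₀ := by
      rw [hs₀, Finset.mem_filter]
      exact ⟨by simp [hs, Set.Finite.mem_toFinset, Function.mem_support, hf0], rfl⟩
    exact Finset.mem_coe.2 (Finset.mem_image.2 ⟨myArr σ γ, hmem, myPsi_arr σ γ⟩)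
  rw [finsum_eq_finset_sum_of_support_subset _ hsupp]
  have hmemh : ∀ α ∈ s₀, α.2.1 = γ.1 := fun α hα => (Finset.mem_filter.1 hα).2
  rw [Finset.sum_image (fun α hα α' hα' h => by
    rw [← arr_myPsi γ α (hmemh α hα), ← arr_myPsi γ α' (hmemh α' hα'), h])]
  rw [Finset.sum_congr rfl (fun α hα => by
    rw [arr_myPsi γ α (hmemh α hα), ← myV_eq ξ γ α (hmemh α hα)])]
  refine Finset.sum_subset (Finset.filter_subset _ _) (fun α hα hn => ?_)
  have : ¬ α.2.1 = γ.1 := by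
    intro h; exact hn (Finset.mem_filter.2 ⟨hα, h⟩)
  rw [myV_ne ξ γ α this, mul_zero]

lemma myV_injOn (ξ : GrpdSrc Ob x → ℂ) (α : GrpdArr Ob) :
    Set.InjOn (fun γ => myPsi γ α) (Function.support (fun γ => myV ξ α γ)) := by
  intro γ hγ γ' hγ' h
  have h1 : α.2.1 = γ.1 := by
    by_contra hn; exact hγ (myV_ne ξ γ α hn)
  have h2 : α.2.1 = γ'.1 := by
    by_contra hn; exact hγ' (myV_ne ξ γ' α hn)
  obtain ⟨y, z, a⟩ := α
  obtain ⟨b, g⟩ := γ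
  obtain ⟨b', g'⟩ := γ'
  dsimp at h1 h2
  subst h1; subst h2
  have e1 : myPsi (⟨z, g⟩ : GrpdSrc Ob x) ⟨y, z, a⟩ = ⟨y, g ≫ Groupoid.inv a⟩ := by simp [myPsi]
  have e2 : myPsi (⟨z, g'⟩ : GrpdSrc Ob x) ⟨y, z, a⟩ = ⟨y, g' ≫ Groupoid.inv a⟩ := by
    simp [myPsi]
  dsimp at h
  rw [e1, e2] at h
  rw [Groupoid.inv_eq_inv] at h
  injection h with h1 h2
  rw [cancel_mono] at h2
  rw [h2]

lemma unit_conv (f : GrpdArr Ob → ℂ) (h : ∀ γ : GrpdArr Ob, f γ ≠ 0 → IsUnitArrow γ)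
    (ξ : GrpdSrc Ob x → ℂ) (γ : GrpdSrc Ob x) :
    ∑ᶠ σ : GrpdSrc Ob x, f (myArr σ γ) * ξ σ = f ⟨γ.1, γ.1, 𝟙 γ.1⟩ * ξ γ := by
  have hz : ∀ σ : GrpdSrc Ob x, σ ≠ γ → f (myArr σ γ) * ξ σ = 0 := by
    intro σ hσ
    rcases eq_or_ne (f (myArr σ γ)) 0 with h0 | h0
    · rw [h0, zero_mul]
    · exfalso
      obtain ⟨u, hu⟩ := h _ h0
      obtain ⟨b, gb⟩ := σ
      obtain ⟨c, gc⟩ := γ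
      simp only [myArr] at hu
      injection hu with h1 h2
      subst h1
      have h2' := eq_of_heq h2
      injection h2' with h3 h4
      subst h3
      have h4' := eq_of_heq h4
      have hgc : gc = gb := by
        have := congrArg (fun t => gb ≫ t) h4'
        simpa [Groupoid.inv_eq_inv] using this
      exact hσ (by rw [hgc])
  rw [finsum_eq_single _ γ hz]
  congr 2
  obtain ⟨c, gc⟩ := γ
  simp [myArr, Groupoid.inv_eq_inv]

end Helpers

/-- For a finitely supported `f` on a discrete groupoid,
`‖f‖_∞ ≤ sup_x ‖π_x(f)‖` where `π_x(f)` is left convolution by `f` on `ℓ^p(Gx)`;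
moreover if `f` is supported on the unit space then equality holds. -/

theorem stmt_9 {Ob : Type*} [Groupoid Ob] (p : ℝ≥0∞) [Fact (1 ≤ p)] (hp' : p ≠ ∞)
    (f : GrpdArr Ob → ℂ) (hf : (Function.support f).Finite)
    (T : ∀ x : Ob, lp (fun _ : GrpdSrc Ob x => ℂ) p →L[ℂ] lp (fun _ : GrpdSrc Ob x => ℂ) p)
    (hT : ∀ (x : Ob) (ξ : lp (fun _ : GrpdSrc Ob x => ℂ) p) (γ : GrpdSrc Ob x),
      (T x ξ : ∀ _ : GrpdSrc Ob x, ℂ) γ =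
        ∑ᶠ σ : GrpdSrc Ob x, f ⟨σ.1, γ.1, Groupoid.inv σ.2 ≫ γ.2⟩ * (ξ : ∀ _, ℂ) σ) :
    (⨆ γ : GrpdArr Ob, ‖f γ‖) ≤ (⨆ x : Ob, ‖T x‖) ∧
      ((∀ γ : GrpdArr Ob, f γ ≠ 0 → IsUnitArrow γ) →
        (⨆ x : Ob, ‖T x‖) = ⨆ γ : GrpdArr Ob, ‖f γ‖) := by
  classical
  have hp1 : (1 : ℝ≥0∞) ≤ p := Fact.out
  have hp0 : p ≠ 0 := by intro h; simp [h] at hp1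
  have hpr : 0 < p.toReal := ENNReal.toReal_pos hp0 hp'
  set s := hf.toFinset with hs
  set C := ∑ α ∈ s, ‖f α‖ with hC
  have hC0 : 0 ≤ C := Finset.sum_nonneg fun _ _ => norm_nonneg _
  have hfC : ∀ γ : GrpdArr Ob, ‖f γ‖ ≤ C := by
    intro γ
    rcases eq_or_ne (f γ) 0 with h0 | h0
    · rw [h0]; simpa using hC0
    · exact Finset.single_le_sum (f := fun α => ‖f α‖)
        (fun _ _ => norm_nonneg _) (hf.mem_toFinset.2 h0)
  have hTx : ∀ (x : Ob) (ξ : lp (fun _ : GrpdSrc Ob x => ℂ) p) (γ : GrpdSrc Ob x),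
      (T x ξ : ∀ _, ℂ) γ = ∑ᶠ σ : GrpdSrc Ob x, f (myArr σ γ) * (ξ : ∀ _, ℂ) σ :=
    fun x ξ γ => hT x ξ γ
  -- uniform bound on ‖T x‖
  have hdecomp : ∀ (x : Ob) (ξ : lp (fun _ : GrpdSrc Ob x => ℂ) p), ‖T x ξ‖ ≤ C * ‖ξ‖ := by
    intro x ξ
    have hkey := fun α : GrpdArr Ob =>
      lp_mem_norm_le p hp' ξ (myV (⇑ξ) α) (fun γ => myPsi γ α) (myV_injOn (⇑ξ) α)
        (fun γ hγ => myV_eq (⇑ξ) γ α (by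
          by_contra hn; exact hγ (myV_ne (⇑ξ) γ α hn)))
    choose hm hnorm using hkey
    have hTeq : T x ξ = ∑ α ∈ s,
        f α • (⟨myV (⇑ξ) α, hm α⟩ : lp (fun _ : GrpdSrc Ob x => ℂ) p) := by
      apply lp.ext
      funext γ
      rw [hTx x ξ γ, conv_rewrite f hf (⇑ξ) γ]
      rw [lp.coeFn_sum]
      rw [Finset.sum_apply]
      apply Finset.sum_congr rfl
      intro α _
      rw [lp.coeFn_smul]
      rfl
    rw [hTeq]
    calc ‖∑ α ∈ s, f α • (⟨myV (⇑ξ) α, hm α⟩ : lp (fun _ : GrpdSrc Ob x => ℂ) p)‖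
        ≤ ∑ α ∈ s, ‖f α • (⟨myV (⇑ξ) α, hm α⟩ : lp (fun _ : GrpdSrc Ob x => ℂ) p)‖ :=
          norm_sum_le _ _
      _ ≤ ∑ α ∈ s, ‖f α‖ * ‖ξ‖ := by
          refine Finset.sum_le_sum fun α _ => ?_
          rw [norm_smul]
          exact mul_le_mul_of_nonneg_left (hnorm α) (norm_nonneg _)
      _ = C * ‖ξ‖ := by rw [← Finset.sum_mul]
  have hTC : ∀ x, ‖T x‖ ≤ C := fun x =>
    (T x).opNorm_le_bound hC0 (hdecomp x)
  have hbddT : BddAbove (Set.range fun x => ‖T x‖) := ⟨C, by rintro - ⟨x, rfl⟩; exact hTC x⟩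
  have hbddf : BddAbove (Set.range fun γ : GrpdArr Ob => ‖f γ‖) :=
    ⟨C, by rintro - ⟨γ, rfl⟩; exact hfC γ⟩
  -- pointwise bound
  have hpt : ∀ γ : GrpdArr Ob, ‖f γ‖ ≤ ‖T γ.1‖ := by
    rintro ⟨a, b, g⟩
    set δ : lp (fun _ : GrpdSrc Ob a => ℂ) p := lp.single p (⟨a, 𝟙 a⟩ : GrpdSrc Ob a) (1 : ℂ)
      with hδ
    have heval : (T a δ : ∀ _, ℂ) ⟨b, g⟩ = f ⟨a, b, g⟩ := by
      rw [hTx a δ (⟨b, g⟩ : GrpdSrc Ob a)]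
      rw [finsum_eq_single _ (⟨a, 𝟙 a⟩ : GrpdSrc Ob a) (fun σ hσ => by
        rw [hδ, lp.single_apply_ne p _ _ hσ, mul_zero])]
      rw [hδ, lp.single_apply_self, mul_one]
      congr 1
      simp [myArr, Groupoid.inv_eq_inv]
    have hnd : ‖δ‖ = 1 := by
      have := lp.norm_single (E := fun _ : GrpdSrc Ob a => ℂ) (pos_iff_ne_zero.2 hp0)
        (⟨a, 𝟙 a⟩ : GrpdSrc Ob a) (1 : ℂ)
      simpa using this
    calc ‖f ⟨a, b, g⟩‖ = ‖(T a δ : ∀ _, ℂ) ⟨b, g⟩‖ := by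
          rw [heval]
      _ ≤ ‖T a δ‖ := lp.norm_apply_le_norm hp0 _ _
      _ ≤ ‖T a‖ * ‖δ‖ := (T a).le_opNorm δ
      _ = ‖T a‖ := by rw [hnd, mul_one]
  rcases isEmpty_or_nonempty Ob with hOb | hOb
  · constructor
    · simp [Real.iSup_of_isEmpty]
    · intro _; simp [Real.iSup_of_isEmpty]
  · have hpart1 : (⨆ γ : GrpdArr Ob, ‖f γ‖) ≤ ⨆ x : Ob, ‖T x‖ := by
      have : Nonempty (GrpdArr Ob) := ⟨⟨Classical.arbitrary Ob, Classical.arbitrary Ob,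
        𝟙 _⟩⟩
      refine ciSup_le fun γ => ?_
      exact (hpt γ).trans (le_ciSup hbddT γ.1)
    refine ⟨hpart1, fun hunit => le_antisymm ?_ hpart1⟩
    set M := ⨆ γ : GrpdArr Ob, ‖f γ‖ with hM
    have hM0 : 0 ≤ M := Real.iSup_nonneg fun γ => norm_nonneg _
    have hMle : ∀ γ : GrpdArr Ob, ‖f γ‖ ≤ M := fun γ => le_ciSup hbddf γ
    refine ciSup_le fun x => ?_
    refine (T x).opNorm_le_bound hM0 fun ξ => ?_
    refine lp_norm_le_mul p hp' (T x ξ) ξ hM0 fun γ => ?_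
    rw [hTx x ξ γ, unit_conv f hunit (⇑ξ) γ]
    rw [norm_mul]
    exact mul_le_mul_of_nonneg_right (hMle _) (norm_nonneg _)
end

section
/- The kernel of the canonical surjective homomorphism ℤ/2 ∗ ℤ/3 → ℤ/2 × ℤ/3 is a free group of rank 2; in particular, the free group F₂ embeds as a finite-index (index 6) normal subgroup of ℤ/2 ∗ ℤ/3. -/
open Monoid
open scoped Monoid.Coprod

/-- The canonical homomorphism `ℤ/2 ∗ ℤ/3 → ℤ/2 × ℤ/3` from the free product to
the direct product. -/
noncomputable def canonicalHom :
    (Multiplicative (ZMod 2) ∗ Multiplicative (ZMod 3)) →*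
      Multiplicative (ZMod 2) × Multiplicative (ZMod 3) :=
  Coprod.lift (MonoidHom.inl _ _) (MonoidHom.inr _ _)

namespace Stmt15

abbrev P := Multiplicative (ZMod 2) × Multiplicative (ZMod 3)
abbrev F := FreeGroup (Fin 2)
abbrev G := Multiplicative (ZMod 2) ∗ Multiplicative (ZMod 3)

def A : F := FreeGroup.of 0
def B : F := FreeGroup.of 1

/-- translation action of `P` on `P → F` -/
def ψ : P →* MulAut (P → F) where
  toFun p :=
    { toFun := fun f d => f (d * p)
      invFun := fun f d => f (d * p⁻¹)
      left_inv := fun f => by funext d; simp [mul_assoc]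
      right_inv := fun f => by funext d; simp [mul_assoc]
      map_mul' := fun f g => rfl }
  map_one' := by ext f d; simp
  map_mul' p q := by ext f d; simp [mul_assoc]

abbrev W := (P → F) ⋊[ψ] P

def px : P := (Multiplicative.ofAdd 1, 1)
def py : P := (1, Multiplicative.ofAdd 1)

/-- cocycle value for `y` -/
def cy : P → F := fun d =>
  if d.1 = 1 then 1
  else if d.2 = 1 then A
  else if d.2 = Multiplicative.ofAdd 1 then B
  else B⁻¹ * A⁻¹

def Xh : W := ⟨1, px⟩
def Yh : W := ⟨cy, py⟩

lemma W_ext {a b : W} (h1 : a.left = b.left) (h2 : a.right = b.right) : a = b := by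
  cases a; cases b; cases h1; cases h2; rfl

lemma Xh_sq : Xh * Xh = 1 := by
  refine W_ext ?_ ?_
  · funext d
    show ((1 : P → F) * ψ px 1) d = (1 : P → F) d
    simp
  · show px * px = 1
    decide

lemma Yh_cube : Yh * (Yh * Yh) = 1 := by
  refine W_ext ?_ ?_
  · funext d
    show (cy * ψ py (cy * ψ py cy)) d = (1 : P → F) d
    show cy d * (cy (d * py) * cy (d * py * py)) = 1
    obtain ⟨a, b⟩ := d
    revert a b
    decide
  · show py * (py * py) = 1
    decide

def hX : Multiplicative (ZMod 2) →* W :=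
  AddMonoidHom.toMultiplicativeLeft <| ZMod.lift 2
    ⟨zmultiplesHom (Additive W) (Additive.ofMul Xh), by
      show (2:ℤ) • Additive.ofMul Xh = 0
      rw [two_zsmul]
      exact congrArg Additive.ofMul Xh_sq⟩

def hY : Multiplicative (ZMod 3) →* W :=
  AddMonoidHom.toMultiplicativeLeft <| ZMod.lift 3
    ⟨zmultiplesHom (Additive W) (Additive.ofMul Yh), by
      show (3:ℤ) • Additive.ofMul Yh = 0
      rw [show (3:ℤ) = 1+1+1 by norm_num, add_zsmul, add_zsmul, one_zsmul]
      rw [show Additive.ofMul Yh + Additive.ofMul Yh + Additive.ofMul Yh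
        = Additive.ofMul (Yh * (Yh * Yh)) by
          simp only [← ofMul_mul, mul_assoc]]
      exact congrArg Additive.ofMul Yh_cube⟩

noncomputable def Ψ : G →* W := Coprod.lift hX hY

lemma hX_one : hX (Multiplicative.ofAdd 1) = Xh := by
  simp only [hX, AddMonoidHom.coe_toMultiplicativeLeft, Function.comp_apply]
  rw [show (Multiplicative.toAdd (Multiplicative.ofAdd (1 : ZMod 2))) = ((1:ℤ) : ZMod 2) by decide]
  rw [ZMod.lift_coe]
  simp

lemma hY_one : hY (Multiplicative.ofAdd 1) = Yh := by
  simp only [hY, AddMonoidHom.coe_toMultiplicativeLeft, Function.comp_apply]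
  rw [show (Multiplicative.toAdd (Multiplicative.ofAdd (1 : ZMod 3))) = ((1:ℤ) : ZMod 3) by decide]
  rw [ZMod.lift_coe]
  simp

end Stmt15

namespace Stmt15

def x' : G := Coprod.inl (Multiplicative.ofAdd 1)
def y' : G := Coprod.inr (Multiplicative.ofAdd 1)

def gA : G := x' * (y' * (x' * (y' * y')))
def gB : G := y' * (x' * (y' * (x' * y')))

noncomputable def φ : F →* G := FreeGroup.lift (fun i => if i = 0 then gA else gB)

lemma φA : φ (FreeGroup.of 0) = gA := by simp [φ, FreeGroup.lift_apply_of]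
lemma φB : φ (FreeGroup.of 1) = gB := by simp [φ, FreeGroup.lift_apply_of]

lemma inlx : Coprod.inl (Multiplicative.ofAdd (1:ZMod 2)) = x' := rfl
lemma inry : Coprod.inr (Multiplicative.ofAdd (1:ZMod 3)) = y' := rfl

lemma xx : x' * x' = 1 := by
  rw [x', ← map_mul]
  rw [show (Multiplicative.ofAdd (1:ZMod 2)) * Multiplicative.ofAdd 1 = 1 by decide]
  simp

lemma xxz (z : G) : x' * (x' * z) = z := by rw [← mul_assoc, xx, one_mul]

lemma yyy : y' * (y' * y') = 1 := by
  rw [y', ← map_mul, ← map_mul]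
  rw [show (Multiplicative.ofAdd (1:ZMod 3)) * (Multiplicative.ofAdd 1 * Multiplicative.ofAdd 1)
    = 1 by decide]
  simp

lemma yyyz (z : G) : y' * (y' * (y' * z)) = z := by
  rw [← mul_assoc, ← mul_assoc, mul_assoc y' y' y', yyy, one_mul]

lemma x'inv : x'⁻¹ = x' := inv_eq_of_mul_eq_one_right xx
lemma y'inv : y'⁻¹ = y' * y' := inv_eq_of_mul_eq_one_right yyy

def r : P → G := fun d => Coprod.inl d.1 * Coprod.inr d.2

def S (g : G) : Prop :=
  ∀ d : P, g * r d = r ((Ψ g).right * d) * φ ((Ψ g).left (d⁻¹ * (Ψ g).right⁻¹))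

lemma S_mul {g₁ g₂ : G} (h1 : S g₁) (h2 : S g₂) : S (g₁ * g₂) := by
  intro d
  rw [mul_assoc, h2 d, ← mul_assoc, h1 ((Ψ g₂).right * d), mul_assoc, map_mul Ψ]
  congr 1
  · rw [SemidirectProduct.mul_right, mul_assoc]
  · rw [← map_mul φ]
    congr 1
    rw [SemidirectProduct.mul_left, SemidirectProduct.mul_right, Pi.mul_apply]
    have hψ : ∀ (p : P) (f : P → F) (e : P), ψ p f e = f (e * p) := fun _ _ _ => rfl
    rw [hψ]
    congr 1
    · simp [mul_inv_rev, mul_comm, mul_assoc, mul_left_comm]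
    · simp [mul_inv_rev, mul_comm, mul_assoc, mul_left_comm,
        inv_mul_cancel_left, mul_inv_cancel_left]

lemma S_one : S 1 := by
  intro d
  simp [map_one Ψ, SemidirectProduct.one_left, SemidirectProduct.one_right]

lemma S_x : S x' := by
  intro d
  rw [show Ψ x' = Xh by rw [x', Ψ, Coprod.lift_apply_inl, hX_one]]
  show x' * r d = r (px * d) * φ ((1 : P → F) _)
  simp only [Pi.one_apply, map_one, mul_one]
  rw [x', r, r, ← mul_assoc, ← map_mul]
  simp [px]

lemma S_y : S y' := by
  intro d
  rw [show Ψ y' = Yh by rw [y', Ψ, Coprod.lift_apply_inr, hY_one]]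
  show y' * r d = r (py * d) * φ (cy (d⁻¹ * py⁻¹))
  have hm2 : ∀ m : Multiplicative (ZMod 2), m = 1 ∨ m = Multiplicative.ofAdd 1 := by decide
  have hm3 : ∀ m : Multiplicative (ZMod 3), m = 1 ∨ m = Multiplicative.ofAdd 1 ∨
      m = Multiplicative.ofAdd 1 * Multiplicative.ofAdd 1 := by decide
  obtain ⟨a, b⟩ := d
  rcases hm2 a with rfl | rfl <;> rcases hm3 b with rfl | rfl | rfl <;>
    simp (config := { decide := true }) [r, py, cy, Prod.mk_mul_mk, A, B, φA, φB, gA, gB,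
      inlx, inry, map_mul, map_inv, mul_inv_rev, x'inv, y'inv,
      mul_assoc, xx, xxz, yyy, yyyz]

lemma key (g : G) : S g := by
  have hm2 : ∀ m : Multiplicative (ZMod 2), m = 1 ∨ m = Multiplicative.ofAdd 1 := by decide
  have hm3 : ∀ m : Multiplicative (ZMod 3), m = 1 ∨ m = Multiplicative.ofAdd 1 ∨
      m = Multiplicative.ofAdd 1 * Multiplicative.ofAdd 1 := by decide
  refine Coprod.induction_on g (fun m => ?_) (fun m => ?_) (fun _ _ => S_mul)
  · rcases hm2 m with rfl | rfl
    · rw [map_one]; exact S_one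
    · exact S_x
  · rcases hm3 m with rfl | rfl | rfl
    · rw [map_one]; exact S_one
    · exact S_y
    · rw [map_mul]; exact S_mul S_y S_y

end Stmt15

namespace Stmt15

lemma Ψx : Ψ x' = Xh := by rw [x', Ψ, Coprod.lift_apply_inl, hX_one]
lemma Ψy : Ψ y' = Yh := by rw [y', Ψ, Coprod.lift_apply_inr, hY_one]

lemma right_Psi (g : G) : (Ψ g).right = canonicalHom g := by
  have hm2 : ∀ m : Multiplicative (ZMod 2), m = 1 ∨ m = Multiplicative.ofAdd 1 := by decide
  have hm3 : ∀ m : Multiplicative (ZMod 3), m = 1 ∨ m = Multiplicative.ofAdd 1 ∨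
      m = Multiplicative.ofAdd 1 * Multiplicative.ofAdd 1 := by decide
  have : (SemidirectProduct.rightHom.comp Ψ) = canonicalHom := by
    apply Coprod.hom_ext <;> apply MonoidHom.ext <;> intro m
    · rcases hm2 m with rfl | rfl <;>
        simp (config := { decide := true }) [canonicalHom, inlx, Ψx, Coprod.lift_apply_inl,
          Xh, px, map_mul, Prod.mk_mul_mk]
    · rcases hm3 m with rfl | rfl | rfl <;>
        simp (config := { decide := true }) [canonicalHom, inry, Ψy, Coprod.lift_apply_inr,
          Yh, py, map_mul, Prod.mk_mul_mk]
  exact DFunLike.congr_fun this g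

lemma mem_ker_right {k : G} (hk : k ∈ canonicalHom.ker) : (Ψ k).right = 1 := by
  rw [right_Psi]; exact hk

noncomputable def ρhom : canonicalHom.ker →* F where
  toFun k := (Ψ k.1).left 1
  map_one' := by simp [map_one Ψ]
  map_mul' a b := by
    have hψ : ∀ (p : P) (f : P → F) (e : P), ψ p f e = f (e * p) := fun _ _ _ => rfl
    show (Ψ (a.1 * b.1)).left 1 = _
    rw [map_mul Ψ, SemidirectProduct.mul_left, Pi.mul_apply, hψ, mem_ker_right a.2]
    simp

lemma canonical_φ (w : F) : canonicalHom (φ w) = 1 := by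
  have : canonicalHom.comp φ = 1 := by
    apply FreeGroup.ext_hom
    intro i
    fin_cases i <;>
      simp [φA, φB, gA, gB, map_mul, x', y', canonicalHom,
        Coprod.lift_apply_inl, Coprod.lift_apply_inr] <;>
      decide
  exact DFunLike.congr_fun this w

noncomputable def φker : F →* canonicalHom.ker :=
  φ.codRestrict _ (fun w => canonical_φ w)

lemma φ_ρ (k : canonicalHom.ker) : φ (ρhom k) = k.1 := by
  have h := key k.1 1
  rw [mem_ker_right k.2] at h
  simpa [r, ρhom] using h.symm

lemma ρ_φ (w : F) : ρhom (φker w) = w := by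
  have : ρhom.comp φker = MonoidHom.id F := by
    apply FreeGroup.ext_hom
    intro i
    have hψ : ∀ (p : P) (f : P → F) (e : P), ψ p f e = f (e * p) := fun _ _ _ => rfl
    have hi : ∀ j : Fin 2, j = 0 ∨ j = 1 := by decide
    rcases hi i with rfl | rfl <;>
    · dsimp only [MonoidHom.comp_apply, MonoidHom.id_apply, ρhom, φker, MonoidHom.coe_mk, OneHom.coe_mk, MonoidHom.codRestrict_apply]
      simp (config := { decide := true }) only [φA, φB, gA, gB, map_mul Ψ, Ψx, Ψy,
        SemidirectProduct.mul_left, SemidirectProduct.mul_right, Pi.mul_apply, hψ,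
        Xh, Yh, cy, px, py, Pi.one_apply, one_mul, mul_one, A, B]
  exact DFunLike.congr_fun this w

noncomputable def kerEquiv : canonicalHom.ker ≃* F :=
  MonoidHom.toMulEquiv ρhom φker
    (by apply MonoidHom.ext; intro k; apply Subtype.ext; exact φ_ρ k)
    (by apply MonoidHom.ext; intro w; exact ρ_φ w)

end Stmt15

/-- The canonical homomorphism `ℤ/2 ∗ ℤ/3 → ℤ/2 × ℤ/3` is
surjective, and its kernel is a free group of rank 2 of index 6; in particular
`F₂` embeds as a finite-index (index 6) normal subgroup of `ℤ/2 ∗ ℤ/3`. -/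
theorem stmt_15 :
    Function.Surjective canonicalHom ∧
      Nonempty (canonicalHom.ker ≃* FreeGroup (Fin 2)) ∧
      canonicalHom.ker.index = 6 ∧ canonicalHom.ker.Normal := by
  have hsurj : Function.Surjective canonicalHom := by
    rintro ⟨a, b⟩
    refine ⟨Coprod.inl a * Coprod.inr b, ?_⟩
    simp [canonicalHom, Coprod.lift_apply_inl, Coprod.lift_apply_inr, Prod.mk_mul_mk]
  refine ⟨hsurj, ⟨Stmt15.kerEquiv⟩, ?_, inferInstance⟩
  rw [Subgroup.index_ker canonicalHom, MonoidHom.range_eq_top_of_surjective _ hsurj]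
  have : Nat.card ((⊤ : Subgroup (Multiplicative (ZMod 2) × Multiplicative (ZMod 3)))) =
      Nat.card (Multiplicative (ZMod 2) × Multiplicative (ZMod 3)) :=
    Nat.card_congr Subgroup.topEquiv.toEquiv
  rw [this, Nat.card_prod]
  rw [show Nat.card (Multiplicative (ZMod 2)) = 2 by
      rw [Nat.card_congr (Multiplicative.toAdd (α := ZMod 2)), Nat.card_zmod]]
  rw [show Nat.card (Multiplicative (ZMod 3)) = 3 by
      rw [Nat.card_congr (Multiplicative.toAdd (α := ZMod 3)), Nat.card_zmod]]
end
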